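/- The Banach–Mazur distance of ℓ_r^n to Euclidean space ℓ₂^n equals n^{1/r − 1/2} for 1 ≤ r ≤ 2; in particular, if r_i ↑ 2 and n_i are chosen so that n_i^{1/r_i − 1/2} → ∞, then d(ℓ_{r_i}^{n_i}) → ∞. -/

import Mathlib

/-- A factorization `T = A ∘ B` of an operator through a (real) Hilbert space `H`. -/
structure HilbertFactorization {X Y : Type} [NormedAddCommGroup X] [NormedSpace ℝ X]
    [NormedAddCommGroup Y] [NormedSpace ℝ Y] (T : X →L[ℝ] Y) where
  H : Type
  [grp : NormedAddCommGroup H]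
  [ip : InnerProductSpace ℝ H]
  B : X →L[ℝ] H
  A : H →L[ℝ] Y
  eq : A.comp B = T

/-- The quantity `‖A‖ * ‖B‖` of a Hilbert space factorization. -/
noncomputable def HilbertFactorization.c {X Y : Type} [NormedAddCommGroup X]
    [NormedSpace ℝ X] [NormedAddCommGroup Y] [NormedSpace ℝ Y] {T : X →L[ℝ] Y}
    (F : HilbertFactorization T) : ℝ :=
  letI := F.grp
  letI := F.ip
  ‖F.A‖ * ‖F.B‖

/-- The factorization constant `γ₂(T)` of an operator through Hilbert space. -/
noncomputable def gamma2 {X Y : Type} [NormedAddCommGroup X] [NormedSpace ℝ X]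
    [NormedAddCommGroup Y] [NormedSpace ℝ Y] (T : X →L[ℝ] Y) : ℝ :=
  sInf (Set.range fun F : HilbertFactorization T => F.c)

/-- The Banach–Mazur distance of a normed space `E` from the Euclidean space of its
(finite) dimension: the infimum of `‖u‖ * ‖u⁻¹‖` over isomorphisms. -/
noncomputable def euclDist (E : Type) [NormedAddCommGroup E] [NormedSpace ℝ E] : ℝ :=
  sInf {c : ℝ | ∃ u : E ≃L[ℝ] EuclideanSpace ℝ (Fin (Module.finrank ℝ E)),
    c = ‖(u : E →L[ℝ] EuclideanSpace ℝ (Fin (Module.finrank ℝ E)))‖ *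
        ‖(u.symm : EuclideanSpace ℝ (Fin (Module.finrank ℝ E)) →L[ℝ] E)‖}

/-- A (two-sided, not necessarily closed) ideal in the algebra `L(X)`. -/
def IsOpIdeal {X : Type} [NormedAddCommGroup X] [NormedSpace ℝ X]
    (I : Set (X →L[ℝ] X)) : Prop :=
  (0 : X →L[ℝ] X) ∈ I ∧ (∀ S ∈ I, ∀ T ∈ I, S + T ∈ I) ∧
    (∀ c : ℝ, ∀ S ∈ I, c • S ∈ I) ∧
    ∀ A : X →L[ℝ] X, ∀ S ∈ I, A.comp S ∈ I ∧ S.comp A ∈ I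

/-- A closed two-sided ideal in the Banach algebra `L(X)`. -/
def IsClosedOpIdeal {X : Type} [NormedAddCommGroup X] [NormedSpace ℝ X]
    (I : Set (X →L[ℝ] X)) : Prop :=
  IsClosed I ∧ IsOpIdeal I

open Finset

lemma aux_sum_rpow_le_rpow_sum {ι : Type*} (s : Finset ι) (t : ι → ℝ) (ht : ∀ i, 0 ≤ t i)
    {q : ℝ} (hq : 1 ≤ q) : ∑ i ∈ s, t i ^ q ≤ (∑ i ∈ s, t i) ^ q := by
  classical
  induction s using Finset.induction with
  | empty => simp [Real.zero_rpow (by positivity : q ≠ 0)]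
  | @insert i s hi ih =>

    rw [Finset.sum_insert hi, Finset.sum_insert hi]
    have hs : (0:ℝ) ≤ ∑ j ∈ s, t j := Finset.sum_nonneg fun j _ => ht j
    have key : t i ^ q + (∑ j ∈ s, t j) ^ q ≤ (t i + ∑ j ∈ s, t j) ^ q := by
      have := NNReal.add_rpow_le_rpow_add (⟨t i, ht i⟩ : NNReal) ⟨∑ j ∈ s, t j, hs⟩ hq
      have h2 := NNReal.coe_le_coe.2 this
      push_cast [NNReal.coe_rpow] at h2
      convert h2 using 2 <;> rfl
    linarith [ih]

lemma aux_exists_signs {ι F : Type*} [NormedAddCommGroup F] [InnerProductSpace ℝ F]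
    (s : Finset ι) (a : ι → F) :
    ∃ ε : ι → ℝ, (∀ j, ε j = 1 ∨ ε j = -1) ∧
      ‖∑ j ∈ s, ε j • a j‖ ^ 2 ≤ ∑ j ∈ s, ‖a j‖ ^ 2 := by
  classical
  induction s using Finset.induction with
  | empty => exact ⟨fun _ => 1, fun _ => Or.inl rfl, by simp⟩
  | @insert i s hi ih =>

    obtain ⟨ε, hε, hle⟩ := ih
    set x := ∑ j ∈ s, ε j • a j with hx
    have par : ‖x + a i‖ ^ 2 + ‖x - a i‖ ^ 2 = 2 * (‖x‖ ^ 2 + ‖a i‖ ^ 2) := by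
      have := parallelogram_law_with_norm ℝ x (a i)
      simp only [pow_two]; linarith
    have : ‖x + a i‖ ^ 2 ≤ ‖x‖ ^ 2 + ‖a i‖ ^ 2 ∨ ‖x - a i‖ ^ 2 ≤ ‖x‖ ^ 2 + ‖a i‖ ^ 2 := by
      by_contra h
      push_neg at h
      linarith [h.1, h.2]
    obtain h | h := this
    · refine ⟨Function.update ε i 1, ?_, ?_⟩
      · intro j
        rcases eq_or_ne j i with rfl | hj
        · simp
        · simp [Function.update_of_ne hj]; exact hε j
      · rw [Finset.sum_insert hi, Finset.sum_insert hi]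
        have hs : ∑ j ∈ s, Function.update ε i 1 j • a j = x := by
          refine Finset.sum_congr rfl fun j hj => ?_
          rw [Function.update_of_ne (by rintro rfl; exact hi hj)]
        rw [hs, Function.update_self, one_smul]
        calc ‖a i + x‖ ^ 2 = ‖x + a i‖ ^ 2 := by rw [add_comm]
        _ ≤ ‖x‖ ^ 2 + ‖a i‖ ^ 2 := h
        _ ≤ _ := by linarith
    · refine ⟨Function.update ε i (-1), ?_, ?_⟩
      · intro j
        rcases eq_or_ne j i with rfl | hj
        · simp
        · simp [Function.update_of_ne hj]; exact hε j
      · rw [Finset.sum_insert hi, Finset.sum_insert hi]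
        have hs : ∑ j ∈ s, Function.update ε i (-1) j • a j = x := by
          refine Finset.sum_congr rfl fun j hj => ?_
          rw [Function.update_of_ne (by rintro rfl; exact hi hj)]
        rw [hs, Function.update_self]
        calc ‖(-1 : ℝ) • a i + x‖ ^ 2 = ‖x - a i‖ ^ 2 := by
              rw [neg_one_smul, add_comm, ← sub_eq_add_neg]
        _ ≤ ‖x‖ ^ 2 + ‖a i‖ ^ 2 := h
        _ ≤ _ := by linarith
open Finset

-- (A'): ℓ² norm ≤ ℓʳ norm, coordinates
lemma aux_l2_le_lr {n : ℕ} (x : Fin n → ℝ) {r : ℝ} (h1 : 1 ≤ r) (h2 : r ≤ 2) :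
    Real.sqrt (∑ i, ‖x i‖ ^ 2) ≤ (∑ i, ‖x i‖ ^ r) ^ (1/r : ℝ) := by
  have hr0 : 0 < r := lt_of_lt_of_le one_pos h1
  have hq : (1:ℝ) ≤ 2 / r := (le_div_iff₀ hr0).2 (by linarith)
  have key : ∑ i, ‖x i‖ ^ (2:ℕ) ≤ (∑ i, ‖x i‖ ^ r) ^ (2/r : ℝ) := by
    have := aux_sum_rpow_le_rpow_sum Finset.univ (fun i => ‖x i‖ ^ r)
      (fun i => Real.rpow_nonneg (norm_nonneg _) r) hq
    calc ∑ i, ‖x i‖ ^ (2:ℕ)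
        = ∑ i, (‖x i‖ ^ r) ^ (2/r : ℝ) := by
          refine Finset.sum_congr rfl fun i _ => ?_
          rw [← Real.rpow_natCast ‖x i‖ 2, ← Real.rpow_mul (norm_nonneg _)]
          congr 1
          field_simp
          norm_num
      _ ≤ (∑ i, ‖x i‖ ^ r) ^ (2/r : ℝ) := this
  have hS : (0:ℝ) ≤ ∑ i, ‖x i‖ ^ r :=
    Finset.sum_nonneg fun i _ => Real.rpow_nonneg (norm_nonneg _) r
  calc Real.sqrt (∑ i, ‖x i‖ ^ 2)
      ≤ Real.sqrt ((∑ i, ‖x i‖ ^ r) ^ (2/r : ℝ)) := Real.sqrt_le_sqrt key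
    _ = (∑ i, ‖x i‖ ^ r) ^ (1/r : ℝ) := by
        rw [Real.sqrt_eq_rpow, ← Real.rpow_mul hS]
        congr 1
        field_simp

-- (B'): ℓʳ norm ≤ n^(1/r-1/2) * ℓ² norm, coordinates
lemma aux_lr_le_l2 {n : ℕ} (x : Fin n → ℝ) {r : ℝ} (h1 : 1 ≤ r) (h2 : r ≤ 2) :
    (∑ i, ‖x i‖ ^ r) ^ (1/r : ℝ) ≤ (n : ℝ) ^ (1/r - 1/2 : ℝ) * Real.sqrt (∑ i, ‖x i‖ ^ 2) := by
  have hr0 : 0 < r := lt_of_lt_of_le one_pos h1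
  have hq : (1:ℝ) ≤ 2 / r := (le_div_iff₀ hr0).2 (by linarith)
  have hold := Real.inner_le_weight_mul_Lp_of_nonneg Finset.univ hq
    (fun _ : Fin n => (1:ℝ)) (fun i => ‖x i‖ ^ r) (fun _ => zero_le_one)
    (fun i => Real.rpow_nonneg (norm_nonneg _) r)
  simp only [one_mul, Finset.sum_const, Finset.card_univ, Fintype.card_fin, nsmul_eq_mul,
    mul_one] at hold
  -- hold : ∑ i, ‖x i‖ ^ r ≤ (n : ℝ) ^ (1 - (2/r)⁻¹) * (∑ i, (‖x i‖ ^ r) ^ (2/r)) ^ (2/r)⁻¹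
  have hsq : ∀ i : Fin n, (‖x i‖ ^ r) ^ (2/r : ℝ) = ‖x i‖ ^ (2:ℕ) := by
    intro i
    rw [← Real.rpow_natCast ‖x i‖ 2, ← Real.rpow_mul (norm_nonneg _)]
    congr 1
    field_simp
    norm_num
  simp only [hsq] at hold
  have hinv : ((2:ℝ)/r)⁻¹ = r/2 := by field_simp
  rw [hinv] at hold
  have hS2 : (0:ℝ) ≤ ∑ i, ‖x i‖ ^ 2 := Finset.sum_nonneg fun i _ => by positivity
  have hSr : (0:ℝ) ≤ ∑ i, ‖x i‖ ^ r :=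
    Finset.sum_nonneg fun i _ => Real.rpow_nonneg (norm_nonneg _) r
  have hrhs : (0:ℝ) ≤ (n : ℝ) ^ (1 - r/2 : ℝ) * (∑ i, ‖x i‖ ^ 2) ^ (r/2 : ℝ) := by positivity
  have := Real.rpow_le_rpow hSr hold (by positivity : (0:ℝ) ≤ 1/r)
  calc (∑ i, ‖x i‖ ^ r) ^ (1/r : ℝ)
      ≤ ((n : ℝ) ^ (1 - r/2 : ℝ) * (∑ i, ‖x i‖ ^ 2) ^ (r/2 : ℝ)) ^ (1/r : ℝ) := this
    _ = (n : ℝ) ^ (1/r - 1/2 : ℝ) * Real.sqrt (∑ i, ‖x i‖ ^ 2) := by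
        rw [Real.mul_rpow (by positivity) (by positivity), ← Real.rpow_mul (by positivity),
          ← Real.rpow_mul hS2, Real.sqrt_eq_rpow]
        congr 2 <;> field_simp <;> ring_nf
lemma aux_lower {n : ℕ} (hn : 0 < n) {r : ℝ} (h1 : 1 ≤ r) (h2 : r ≤ 2)
    (p : ENNReal) [Fact (1 ≤ p)] (hpt : p.toReal = r)
    {F : Type*} [NormedAddCommGroup F] [InnerProductSpace ℝ F]
    (w : PiLp p (fun _ : Fin n => ℝ) ≃L[ℝ] F) :
    (n : ℝ) ^ (1/r - 1/2 : ℝ) ≤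
      ‖(w : PiLp p (fun _ : Fin n => ℝ) →L[ℝ] F)‖ *
      ‖(w.symm : F →L[ℝ] PiLp p (fun _ : Fin n => ℝ))‖ := by
  classical
  set E := PiLp p (fun _ : Fin n => ℝ) with hE
  set W := (w : E →L[ℝ] F)
  set W' := (w.symm : F →L[ℝ] E)
  have hr0 : (0:ℝ) < r := lt_of_lt_of_le one_pos h1
  have hpt0 : 0 < p.toReal := by rw [hpt]; exact hr0
  have npos : (0:ℝ) < (n:ℝ) := by exact_mod_cast hn
  set e : Fin n → E := fun j => (WithLp.equiv p (∀ _ : Fin n, ℝ)).symm (Pi.single j 1) with he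
  have henorm : ∀ j, ‖e j‖ = 1 := fun j =>
    (PiLp.norm_toLp_single p (fun _ : Fin n => ℝ) j 1).trans norm_one
  set a : Fin n → F := fun j => w (e j) with ha
  have hanorm : ∀ j, ‖a j‖ ≤ ‖W‖ := fun j => by
    have := W.le_opNorm (e j)
    exact (by simpa [henorm j] using this : ‖W (e j)‖ ≤ ‖W‖)
  obtain ⟨ε, hε, hle⟩ := aux_exists_signs Finset.univ a
  have habs : ∀ j, ‖ε j‖ = 1 := fun j => by rcases hε j with h | h <;> simp [h]
  set x : E := (WithLp.equiv p (∀ _ : Fin n, ℝ)).symm (fun k => ε k) with hxdef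
  have hxnorm : ‖x‖ = (n : ℝ) ^ (1/r : ℝ) := by
    rw [PiLp.norm_eq_sum hpt0]
    have hxi : ∀ i, (x : PiLp p _) i = ε i := fun i => rfl
    simp only [hxi, habs, Real.one_rpow, Finset.sum_const, Finset.card_univ,
      Fintype.card_fin, nsmul_eq_mul, mul_one, hpt]
  have hxsum : x = ∑ j, ε j • e j := by
    have h1' : (fun k => ε k) = ∑ j, ε j • (Pi.single j 1 : Fin n → ℝ) := by
      funext k
      simp [Finset.sum_apply, Pi.single_apply, mul_ite]
    have L := WithLp.linearEquiv p ℝ (∀ _ : Fin n, ℝ)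
    calc x = (WithLp.linearEquiv p ℝ (∀ _ : Fin n, ℝ)).symm (∑ j, ε j • (Pi.single j 1 : Fin n → ℝ)) := by
            rw [hxdef, ← h1']; rfl
      _ = ∑ j, ε j • e j := by
            rw [map_sum]
            exact Finset.sum_congr rfl fun j _ => by
              rw [map_smul]; rfl
  have hwx : w x = ∑ j, ε j • a j := by
    rw [hxsum, map_sum]
    exact Finset.sum_congr rfl fun j _ => by rw [map_smul]
  have hwx2 : ‖w x‖ ^ 2 ≤ (n : ℝ) * ‖W‖ ^ 2 := by
    rw [hwx]
    refine le_trans hle ?_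
    calc ∑ j, ‖a j‖ ^ 2 ≤ ∑ _j : Fin n, ‖W‖ ^ 2 :=
          Finset.sum_le_sum fun j _ => pow_le_pow_left₀ (norm_nonneg _) (hanorm j) 2
      _ = (n : ℝ) * ‖W‖ ^ 2 := by
          simp [Finset.sum_const, nsmul_eq_mul]
  have hwxle : ‖w x‖ ≤ Real.sqrt n * ‖W‖ := by
    have h0 : ‖w x‖ = Real.sqrt (‖w x‖ ^ 2) := (Real.sqrt_sq (norm_nonneg _)).symm
    rw [h0]
    calc Real.sqrt (‖w x‖ ^ 2) ≤ Real.sqrt ((n : ℝ) * ‖W‖ ^ 2) := Real.sqrt_le_sqrt hwx2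
      _ = Real.sqrt n * ‖W‖ := by
          rw [Real.sqrt_mul npos.le, Real.sqrt_sq (norm_nonneg _)]
  have hxle : ‖x‖ ≤ ‖W'‖ * ‖w x‖ := by
    have := W'.le_opNorm (w x)
    have hW' : W' (w x) = x := by
      simp [W', ContinuousLinearEquiv.coe_coe]
    rwa [hW'] at this
  have hchain : (n : ℝ) ^ (1/r : ℝ) ≤ (‖W‖ * ‖W'‖) * (n : ℝ) ^ (1/2 : ℝ) := by
    have hsqrt : Real.sqrt (n:ℝ) = (n:ℝ) ^ (1/2 : ℝ) := Real.sqrt_eq_rpow _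
    calc (n : ℝ) ^ (1/r : ℝ) = ‖x‖ := hxnorm.symm
      _ ≤ ‖W'‖ * ‖w x‖ := hxle
      _ ≤ ‖W'‖ * (Real.sqrt n * ‖W‖) :=
          mul_le_mul_of_nonneg_left hwxle (norm_nonneg _)
      _ = (‖W‖ * ‖W'‖) * (n : ℝ) ^ (1/2 : ℝ) := by rw [hsqrt]; ring
  have hhalf : (0:ℝ) < (n:ℝ) ^ (1/2 : ℝ) := Real.rpow_pos_of_pos npos _
  have hmul : (n : ℝ) ^ (1/r - 1/2 : ℝ) * (n : ℝ) ^ (1/2 : ℝ) = (n : ℝ) ^ (1/r : ℝ) := by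
    rw [← Real.rpow_add npos]
    norm_num
  have := hchain
  rw [← hmul] at this
  exact le_of_mul_le_mul_right this hhalf

lemma aux_eq {n : ℕ} (hn : 0 < n) {r : ℝ} (h1 : 1 ≤ r) (h2 : r ≤ 2)
    [Fact (1 ≤ ENNReal.ofReal r)] :
    euclDist (PiLp (ENNReal.ofReal r) (fun _ : Fin n => ℝ)) = (n : ℝ) ^ (1/r - 1/2 : ℝ) := by
  classical
  set p := ENNReal.ofReal r with hp
  set E := PiLp p (fun _ : Fin n => ℝ) with hE
  have hr0 : (0:ℝ) < r := lt_of_lt_of_le one_pos h1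
  have hpt : p.toReal = r := ENNReal.toReal_ofReal hr0.le
  have hpt0 : 0 < p.toReal := by rw [hpt]; exact hr0
  haveI : FiniteDimensional ℝ E :=
    (WithLp.linearEquiv p ℝ (∀ _ : Fin n, ℝ)).symm.finiteDimensional
  have hm : Module.finrank ℝ E = n := by
    rw [(WithLp.linearEquiv p ℝ (∀ _ : Fin n, ℝ)).finrank_eq]
    simp [Module.finrank_pi]
  set L1 : E ≃ₗ[ℝ] EuclideanSpace ℝ (Fin n) :=
    (WithLp.linearEquiv p ℝ (∀ _ : Fin n, ℝ)).trans
      (WithLp.linearEquiv 2 ℝ (∀ _ : Fin n, ℝ)).symm with hL1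
  set isom : EuclideanSpace ℝ (Fin n) ≃ₗᵢ[ℝ] EuclideanSpace ℝ (Fin (Module.finrank ℝ E)) :=
    LinearIsometryEquiv.piLpCongrLeft 2 ℝ ℝ (finCongr hm.symm) with hisom
  set u : E ≃L[ℝ] EuclideanSpace ℝ (Fin (Module.finrank ℝ E)) :=
    L1.toContinuousLinearEquiv.trans isom.toContinuousLinearEquiv with hu
  have hunorm : ∀ x : E, ‖u x‖ ≤ ‖x‖ := by
    intro x
    have h1' : ‖u x‖ = ‖L1 x‖ := by
      rw [hu, ContinuousLinearEquiv.trans_apply]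
      rw [show (isom.toContinuousLinearEquiv : _ → _) = (isom : _ → _) from rfl]
      rw [isom.norm_map]
      rfl
    rw [h1', EuclideanSpace.norm_eq, PiLp.norm_eq_sum hpt0, hpt]
    have hxi : ∀ i, (L1 x) i = x i := fun i => rfl
    simp only [hxi]
    exact aux_l2_le_lr (fun i => x i) h1 h2
  have husym : ∀ y, ‖u.symm y‖ ≤ (n : ℝ) ^ (1/r - 1/2 : ℝ) * ‖y‖ := by
    intro y
    set z : EuclideanSpace ℝ (Fin n) := isom.symm y with hz
    have hy : ‖y‖ = ‖z‖ := by rw [hz, isom.symm.norm_map]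
    have h1' : ∀ i, (u.symm y) i = z i := fun i => rfl
    rw [hy, EuclideanSpace.norm_eq, PiLp.norm_eq_sum hpt0, hpt]
    simp only [h1']
    exact aux_lr_le_l2 (fun i => z i) h1 h2
  have hbdd : BddBelow {c : ℝ | ∃ v : E ≃L[ℝ] EuclideanSpace ℝ (Fin (Module.finrank ℝ E)),
      c = ‖(v : E →L[ℝ] EuclideanSpace ℝ (Fin (Module.finrank ℝ E)))‖ *
        ‖(v.symm : EuclideanSpace ℝ (Fin (Module.finrank ℝ E)) →L[ℝ] E)‖} := by
    refine ⟨0, ?_⟩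
    rintro c ⟨v, rfl⟩
    positivity
  have hu1 : ‖(u : E →L[ℝ] EuclideanSpace ℝ (Fin (Module.finrank ℝ E)))‖ ≤ 1 := by
    refine ContinuousLinearMap.opNorm_le_bound _ zero_le_one fun x => ?_
    rw [one_mul]
    exact hunorm x
  have hu2 : ‖(u.symm : EuclideanSpace ℝ (Fin (Module.finrank ℝ E)) →L[ℝ] E)‖ ≤
      (n : ℝ) ^ (1/r - 1/2 : ℝ) := by
    refine ContinuousLinearMap.opNorm_le_bound _ (Real.rpow_nonneg (Nat.cast_nonneg n) _)
      fun y => ?_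
    exact husym y
  apply le_antisymm
  · calc euclDist E ≤ ‖(u : E →L[ℝ] EuclideanSpace ℝ (Fin (Module.finrank ℝ E)))‖ *
          ‖(u.symm : EuclideanSpace ℝ (Fin (Module.finrank ℝ E)) →L[ℝ] E)‖ :=
          csInf_le hbdd ⟨u, rfl⟩
      _ ≤ 1 * (n : ℝ) ^ (1/r - 1/2 : ℝ) :=
          mul_le_mul hu1 hu2 (norm_nonneg _) zero_le_one
      _ = (n : ℝ) ^ (1/r - 1/2 : ℝ) := one_mul _
  · refine le_csInf ⟨_, u, rfl⟩ ?_
    rintro c ⟨v, rfl⟩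
    exact aux_lower hn h1 h2 p hpt v

open Filter in
/-- The Banach–Mazur distance of `ℓ_r^n` to `ℓ₂^n` equals `n ^ (1/r - 1/2)` for
`1 ≤ r ≤ 2`; consequently, if `n_i ^ (1/r_i - 1/2) → ∞` with `1 ≤ r_i ≤ 2`, then
`d(ℓ_{r_i}^{n_i}) → ∞`. -/
theorem stmt_9 :
    (∀ (n : ℕ), 0 < n → ∀ (r : ℝ) (h1 : 1 ≤ r), r ≤ 2 →
      haveI : Fact (1 ≤ ENNReal.ofReal r) := ⟨ENNReal.one_le_ofReal.mpr h1⟩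
      euclDist (PiLp (ENNReal.ofReal r) (fun _ : Fin n => ℝ)) =
        (n : ℝ) ^ (1 / r - 1 / 2 : ℝ)) ∧
    ∀ (ri : ℕ → ℝ) (ni : ℕ → ℕ) (h1 : ∀ i, 1 ≤ ri i), (∀ i, ri i ≤ 2) →
      (∀ i, 0 < ni i) → Monotone ri → Tendsto ri atTop (nhds 2) →
      Tendsto (fun i => (ni i : ℝ) ^ (1 / ri i - 1 / 2 : ℝ)) atTop atTop →
      Tendsto (fun i =>
          haveI : Fact (1 ≤ ENNReal.ofReal (ri i)) := ⟨ENNReal.one_le_ofReal.mpr (h1 i)⟩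
          euclDist (PiLp (ENNReal.ofReal (ri i)) (fun _ : Fin (ni i) => ℝ)))
        atTop atTop := by
  
  constructor
  · intro n hn r hr1 hr2
    haveI : Fact (1 ≤ ENNReal.ofReal r) := ⟨ENNReal.one_le_ofReal.mpr hr1⟩
    exact aux_eq hn hr1 hr2
  · intro ri ni h1 h2 hpos _hmono _hlim hten
    refine hten.congr fun i => ?_
    haveI : Fact (1 ≤ ENNReal.ofReal (ri i)) := ⟨ENNReal.one_le_ofReal.mpr (h1 i)⟩
    exact (aux_eq (hpos i) (h1 i) (h2 i)).symm
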